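/- Let G be a temporal graph and ℓ ≥ 0. The walks of length ℓ in the directed line graph expansion DL(G) are in one-to-one correspondence with the temporal walks of length ℓ+1 in G. -/

import Mathlib

/-- A temporal graph on vertex set `V`: undirected temporal edges `({u,v}, t)`
are encoded by a symmetric, irreflexive relation `edge u v t`. -/
structure TemporalGraph (V : Type*) where
  edge : V → V → ℕ → Prop
  symm : ∀ u v t, edge u v t → edge v u t
  irrefl : ∀ v t, ¬ edge v v t

variable {V : Type*}

/-- Vertices of the directed line graph expansion `DL(G)`: directed copies
`n^t_{uv→}` of the temporal edges of `G`. -/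
def TemporalGraph.DLVert (G : TemporalGraph V) : Type _ :=
  {p : V × V × ℕ // G.edge p.1 p.2.1 p.2.2}

/-- Adjacency in `DL(G)`: there is an edge from `n^t_{uv→}` to `n^s_{xy→}`
iff `v = x` and `t < s`. -/
def TemporalGraph.DLAdj (G : TemporalGraph V) (a b : G.DLVert) : Prop :=
  a.1.2.1 = b.1.1 ∧ a.1.2.2 < b.1.2.2

/-- Static walks of length `ℓ` in `DL(G)`. -/
def TemporalGraph.DLWalk (G : TemporalGraph V) (ℓ : ℕ) : Type _ :=
  {w : Fin (ℓ + 1) → G.DLVert // ∀ i : Fin ℓ, G.DLAdj (w i.castSucc) (w i.succ)}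

/-- Temporal walks of length `k` in `G`: `k+1` vertices and `k` strictly
increasing time stamps with consecutive vertices joined by temporal edges. -/
def TemporalGraph.TWalk (G : TemporalGraph V) (k : ℕ) : Type _ :=
  {p : (Fin (k + 1) → V) × (Fin k → ℕ) //
    (∀ i : Fin k, G.edge (p.1 i.castSucc) (p.1 i.succ) (p.2 i)) ∧ StrictMono p.2}

private lemma dl_key (G : TemporalGraph V) {ℓ : ℕ} (w : G.DLWalk ℓ) (i : Fin (ℓ + 1)) :
    (Fin.cases ((w.1 0).1.1) (fun j => (w.1 j).1.2.1) i.castSucc : V) = (w.1 i).1.1 := by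
  induction i using Fin.cases with
  | zero => simp
  | succ j =>
    rw [← Fin.succ_castSucc, Fin.cases_succ]
    exact (w.2 j).1

/-- The walks of length `ℓ` in `DL(G)` are in one-to-one correspondence with
the temporal walks of length `ℓ + 1` in `G`. -/
theorem dl_walks_equiv_temporal_walks (G : TemporalGraph V) (ℓ : ℕ) :
    Nonempty (G.DLWalk ℓ ≃ G.TWalk (ℓ + 1)) := by
  refine ⟨{
    toFun := fun w => ⟨(fun j => Fin.cases ((w.1 0).1.1) (fun i => (w.1 i).1.2.1) j,
        fun i => (w.1 i).1.2.2), ?_, ?_⟩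
    invFun := fun p => ⟨fun i => ⟨(p.1.1 i.castSucc, p.1.1 i.succ, p.1.2 i), p.2.1 i⟩, ?_⟩
    left_inv := ?_
    right_inv := ?_ }⟩
  · intro i
    simp only [Fin.cases_succ]
    rw [dl_key]
    exact (w.1 i).2
  · rw [Fin.strictMono_iff_lt_succ]
    intro i
    exact (w.2 i).2
  · intro i
    exact ⟨by simp [-Fin.castSucc_succ, Fin.succ_castSucc], p.2.2 (Fin.castSucc_lt_succ (i := i))⟩
  · intro w
    apply Subtype.ext
    funext i
    apply Subtype.ext
    exact Prod.ext (dl_key G w i) rfl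
  · intro p
    apply Subtype.ext
    refine Prod.ext (funext fun j => ?_) rfl
    induction j using Fin.cases with
    | zero => simp
    | succ i => simp
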